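/- With the same damped characteristic ODE Ẋ = V, V̇ = u(t,X) − V, suppose ‖u‖_{L¹(ℝ⁺;L^∞(ℝ³))} ≤ L/8, |x − a| ≤ ε, |v| ≥ R, and L > ε, R > (ε + 2L)/(1 − e^{−T}) for some T > 0. Then sup_{t ∈ [0,T]} |X(t;0,x,v) − a| > L; in particular the trajectory exits the ball B(a,L) within time T. -/

import Mathlib

open MeasureTheory Set

abbrev E3 := EuclideanSpace ℝ (Fin 3)

/-- High-initial-velocity exit lemma for `Ẋ = V`, `V̇ = u(t,X) − V`: if
`‖u‖_{L¹(ℝ⁺;L^∞)} ≤ L/8`, `|x−a| ≤ ε`, `|v| ≥ R`, `L > ε` and `R > (ε+2L)/(1−e^{−T})`,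
then `sup_{[0,T]} |X(t)−a| > L`; in particular the trajectory exits `B(a,L)` by time `T`. -/
theorem stmt10 (u : ℝ → E3 → E3) (ub : ℝ → ℝ)
    (hub0 : ∀ t, 0 ≤ ub t)
    (hub : ∀ t y, ‖u t y‖ ≤ ub t)
    (hubint : IntegrableOn ub (Ioi (0:ℝ)))
    (a x v : E3) (ε R L T : ℝ) (hT : 0 < T)
    (hu1 : ∫ s in Ioi (0:ℝ), ub s ≤ L / 8)
    (hx : ‖x - a‖ ≤ ε) (hv : R ≤ ‖v‖)
    (hL : ε < L) (hR : (ε + 2 * L) / (1 - Real.exp (-T)) < R)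
    (X V : ℝ → E3) (hX0 : X 0 = x) (hV0 : V 0 = v)
    (hXd : ∀ t ≥ (0:ℝ), HasDerivAt X (V t) t)
    (hVd : ∀ t ≥ (0:ℝ), HasDerivAt V (u t (X t) - V t) t) :
    (L < ⨆ t : Icc (0:ℝ) T, ‖X t - a‖) ∧ ∃ t ∈ Icc (0:ℝ) T, L < ‖X t - a‖ := by
  have hTle : (0:ℝ) ≤ T := hT.le
  set f : ℝ → E3 := fun t => u t (X t) with hf
  have hfe : ∀ t ∈ Icc (0:ℝ) T, f t = deriv V t + V t := by
    intro t ht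
    have h := (hVd t ht.1).deriv
    simp [hf, h]
  have hVcont : ContinuousOn V (Icc 0 T) := fun t ht =>
    ((hVd t ht.1).continuousAt).continuousWithinAt
  have hXcont : ContinuousOn X (Icc 0 T) := fun t ht =>
    ((hXd t ht.1).continuousAt).continuousWithinAt
  have hmeas : AEStronglyMeasurable f (volume.restrict (Ioc (0:ℝ) T)) := by
    have h1 : AEStronglyMeasurable (fun t => deriv V t + V t)
        (volume.restrict (Ioc (0:ℝ) T)) := by
      exact ((measurable_deriv V).aestronglyMeasurable.restrict).add
        ((hVcont.mono Ioc_subset_Icc_self).aestronglyMeasurable measurableSet_Ioc)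
    refine h1.congr ?_
    filter_upwards [ae_restrict_mem measurableSet_Ioc] with t ht
    exact (hfe t (Ioc_subset_Icc_self ht)).symm
  have hubT : IntegrableOn ub (Ioc 0 T) := hubint.mono_set Ioc_subset_Ioi_self
  have hubII : IntervalIntegrable ub volume 0 T :=
    (intervalIntegrable_iff_integrableOn_Ioc_of_le hTle).2 hubT
  have hfint : IntegrableOn f (Ioc 0 T) :=
    Integrable.mono' hubT hmeas (ae_of_all _ fun t => hub t (X t))
  have hfII : IntervalIntegrable f volume 0 T :=
    (intervalIntegrable_iff_integrableOn_Ioc_of_le hTle).2 hfint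
  have hgII : IntervalIntegrable (fun s => Real.exp s • f s) volume 0 T := by
    refine (intervalIntegrable_iff_integrableOn_Ioc_of_le hTle).2 ?_
    refine Integrable.mono' (hubT.const_mul (Real.exp T))
      ((Real.continuous_exp.aestronglyMeasurable.restrict).smul hmeas) ?_
    filter_upwards [ae_restrict_mem measurableSet_Ioc] with t ht
    rw [norm_smul, Real.norm_eq_abs, abs_of_pos (Real.exp_pos t)]
    exact mul_le_mul (Real.exp_le_exp.2 ht.2) (hub t (X t)) (norm_nonneg _)
      (Real.exp_pos T).le
  set I : ℝ := ∫ s in (0:ℝ)..T, ub s with hI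
  have hInn : 0 ≤ I := intervalIntegral.integral_nonneg hTle fun s _ => hub0 s
  have hIle : I ≤ L / 8 := by
    refine le_trans ?_ hu1
    rw [hI, intervalIntegral.integral_of_le hTle]
    exact setIntegral_mono_set hubint (ae_of_all _ hub0)
      (ae_of_all _ fun s hs => Ioc_subset_Ioi_self hs)
  -- FTC for X + V
  have hsum : (∫ s in (0:ℝ)..T, f s) = (X T + V T) - (X 0 + V 0) := by
    refine intervalIntegral.integral_eq_sub_of_hasDerivAt (f := fun s => X s + V s) ?_ hfII
    intro t ht
    rw [uIcc_of_le hTle] at ht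
    have := (hXd t ht.1).add (hVd t ht.1)
    rw [show V t + (u t (X t) - V t) = f t by simp [hf]] at this
    exact this
  have hsum' : ‖X T + V T - (x + v)‖ ≤ I := by
    rw [hX0, hV0] at hsum
    rw [← hsum]
    refine le_trans (intervalIntegral.norm_integral_le_abs_of_norm_le
      (ae_of_all _ fun t => hub t (X t)) hubII) ?_
    rw [hI, abs_of_nonneg]
    exact intervalIntegral.integral_nonneg hTle fun s _ => hub0 s
  -- FTC for e^t • V t
  have hW : (∫ s in (0:ℝ)..T, Real.exp s • f s)
      = Real.exp T • V T - Real.exp 0 • V 0 := by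
    refine intervalIntegral.integral_eq_sub_of_hasDerivAt (f := fun s => Real.exp s • V s) ?_ hgII
    intro t ht
    rw [uIcc_of_le hTle] at ht
    have := (Real.hasDerivAt_exp t).smul (hVd t ht.1)
    have h2 : Real.exp t • (u t (X t) - V t) + Real.exp t • V t = Real.exp t • f t := by
      rw [smul_sub]; abel
    rw [h2] at this
    exact this
  have hVT : ‖V T‖ ≤ (Real.exp T)⁻¹ * ‖v‖ + I := by
    have hW' : Real.exp T • V T - v = ∫ s in (0:ℝ)..T, Real.exp s • f s := by
      rw [hW, hV0, Real.exp_zero, one_smul]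
    have h1 : ‖Real.exp T • V T - v‖ ≤ Real.exp T * I := by
      rw [hW']
      calc ‖∫ s in (0:ℝ)..T, Real.exp s • f s‖
          ≤ |∫ s in (0:ℝ)..T, Real.exp T * ub s| := by
            refine intervalIntegral.norm_integral_le_abs_of_norm_le
              ?_ (hubII.const_mul _)
            filter_upwards [ae_restrict_mem measurableSet_uIoc] with t ht
            rw [uIoc_of_le hTle] at ht
            rw [norm_smul, Real.norm_eq_abs, abs_of_pos (Real.exp_pos t)]
            exact mul_le_mul (Real.exp_le_exp.2 ht.2) (hub t (X t)) (norm_nonneg _)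
              (Real.exp_pos T).le
        _ = Real.exp T * I := by
            rw [abs_of_nonneg (intervalIntegral.integral_nonneg hTle
              fun s _ => mul_nonneg (Real.exp_pos T).le (hub0 s)),
              hI, intervalIntegral.integral_const_mul]
    set c : ℝ := Real.exp T with hcdef
    have hc : 0 < c := Real.exp_pos T
    have h2 : c * ‖V T‖ ≤ ‖v‖ + c * I := by
      have := norm_sub_norm_le (c • V T) v
      rw [norm_smul, Real.norm_eq_abs, abs_of_pos hc] at this
      linarith
    calc ‖V T‖ = c⁻¹ * (c * ‖V T‖) := by field_simp
      _ ≤ c⁻¹ * (‖v‖ + c * I) := by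
          exact mul_le_mul_of_nonneg_left h2 (inv_nonneg.2 hc.le)
      _ = c⁻¹ * ‖v‖ + I := by field_simp
  have hXT : L < ‖X T - a‖ := by
    have hdecomp : X T - a = v + ((X T + V T - (x + v)) + (x - a) - V T) := by abel
    have h3 : ‖(X T + V T - (x + v)) + (x - a) - V T‖ ≤ (I + ε) + ‖V T‖ := by
      refine le_trans (norm_sub_le _ _) ?_
      gcongr
      exact le_trans (norm_add_le _ _) (add_le_add hsum' hx)
    have h4 : ‖v‖ - ‖(X T + V T - (x + v)) + (x - a) - V T‖ ≤ ‖X T - a‖ := by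
      rw [hdecomp]
      linarith [norm_le_add_norm_add v ((X T + V T - (x + v)) + (x - a) - V T)]
    have hεnn : 0 ≤ ε := le_trans (norm_nonneg _) hx
    have hLpos : 0 < L := lt_of_le_of_lt hεnn hL
    have hexp : Real.exp (-T) < 1 := Real.exp_lt_one_iff.2 (by linarith)
    have hpos : 0 < 1 - Real.exp (-T) := by linarith
    have hR2 : ε + 2 * L < R * (1 - Real.exp (-T)) := (div_lt_iff₀ hpos).1 hR
    have hRv : R * (1 - Real.exp (-T)) ≤ ‖v‖ * (1 - Real.exp (-T)) :=
      mul_le_mul_of_nonneg_right hv hpos.le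
    have hen : (Real.exp T)⁻¹ = Real.exp (-T) := (Real.exp_neg T).symm
    rw [hen] at hVT
    nlinarith [norm_nonneg v]
  have hTmem : T ∈ Icc (0:ℝ) T := ⟨hTle, le_refl T⟩
  refine ⟨?_, T, hTmem, hXT⟩
  have hc2 : ContinuousOn (fun t => ‖X t - a‖) (Icc (0:ℝ) T) :=
    (hXcont.sub continuousOn_const).norm
  obtain ⟨C, hC⟩ := (isCompact_Icc.image_of_continuousOn hc2).bddAbove
  have hbdd : BddAbove (range fun t : Icc (0:ℝ) T => ‖X t - a‖) := by
    refine ⟨C, ?_⟩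
    rintro y ⟨⟨t, ht⟩, rfl⟩
    exact hC ⟨t, ht, rfl⟩
  exact lt_of_lt_of_le hXT (le_ciSup hbdd ⟨T, hTmem⟩)
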